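/- For any positive integer q and any d ≥ 0, the number of d-dimensional faces of M_q², i.e., the number of subsets γ of the vertex set V of M_q² with |γ| = d + 1 containing at most one diagonal vertex, equals C(q(q−1)/2, d+1) + q·C(q(q−1)/2, d). (Consequently, for any monomial ideal I minimally generated by q ≥ 2 monomials, β_d(I²) ≤ C(q(q−1)/2, d+1) + q·C(q(q−1)/2, d).) -/

import Mathlib

abbrev MqVertex (q : ℕ) := {p : Fin q × Fin q // p.1 ≤ p.2}

open Finset

lemma lt_pairs_card (q : ℕ) :
    (Finset.univ.filter (fun p : Fin q × Fin q => p.1 < p.2)).card = q * (q - 1) / 2 := by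
  classical
  rw [Finset.card_filter]
  rw [← Finset.univ_product_univ, Finset.sum_product_right]
  have h : ∀ j : Fin q, (∑ i : Fin q, if (i, j).1 < (i, j).2 then 1 else 0) = (j : ℕ) := by
    intro j
    rw [← Finset.card_filter]
    have : Finset.univ.filter (fun i : Fin q => (i, j).1 < (i, j).2) = Finset.Iio j := by
      ext i; simp
    rw [this, Fin.card_Iio]
  rw [Finset.sum_congr rfl (fun j _ => h j)]
  rw [Fin.sum_univ_eq_sum_range (fun i => i), Finset.sum_range_id]

lemma Mq_offdiag_card (q : ℕ) :
    (Finset.univ.filter (fun v : MqVertex q => v.1.1 ≠ v.1.2)).card = q * (q - 1) / 2 := by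
  classical
  rw [← lt_pairs_card q]
  refine Finset.card_bij' (fun v _ => v.1) (fun p hp => ⟨p, le_of_lt (by simpa using hp)⟩)
    ?_ ?_ ?_ ?_
  · intro v hv
    simp only [Finset.mem_filter, Finset.mem_univ, true_and] at hv ⊢
    exact lt_of_le_of_ne v.2 hv
  · intro p hp
    simp only [Finset.mem_filter, Finset.mem_univ, true_and] at hp ⊢
    exact ne_of_lt hp
  · intro v hv; rfl
  · intro p hp; rfl

lemma Mq_diag_card (q : ℕ) :
    (Finset.univ.filter (fun v : MqVertex q => v.1.1 = v.1.2)).card = q := by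
  classical
  have : (Finset.univ.filter (fun v : MqVertex q => v.1.1 = v.1.2)).card
      = (Finset.univ : Finset (Fin q)).card := by
    refine Finset.card_nbij' (fun v => v.1.1) (fun i => ⟨(i, i), le_refl i⟩) ?_ ?_ ?_ ?_
    · intro v hv; simp
    · intro i _; simp
    · intro v hv
      simp only [Finset.mem_coe, Finset.mem_filter, Finset.mem_univ, true_and] at hv
      ext : 1
      exact Prod.ext rfl hv
    · intro i _; rfl
  rw [this, Finset.card_univ, Fintype.card_fin]

theorem card_faces_Mq (q d : ℕ) (hq : 0 < q) :
    (Finset.univ.filter (fun γ : Finset (MqVertex q) =>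
        γ.card = d + 1 ∧ (γ.filter (fun v => v.1.1 = v.1.2)).card ≤ 1)).card
      = (q * (q - 1) / 2).choose (d + 1) + q * (q * (q - 1) / 2).choose d := by
  classical
  set O : Finset (MqVertex q) := Finset.univ.filter (fun v => v.1.1 ≠ v.1.2) with hO
  set S₀ : Finset (Finset (MqVertex q)) := Finset.univ.filter (fun γ =>
      γ.card = d + 1 ∧ (γ.filter (fun v => v.1.1 = v.1.2)).card = 0) with hS₀
  set S₁ : Finset (Finset (MqVertex q)) := Finset.univ.filter (fun γ =>
      γ.card = d + 1 ∧ (γ.filter (fun v => v.1.1 = v.1.2)).card = 1) with hS₁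
  have hsplit : Finset.univ.filter (fun γ : Finset (MqVertex q) =>
      γ.card = d + 1 ∧ (γ.filter (fun v => v.1.1 = v.1.2)).card ≤ 1) = S₀ ∪ S₁ := by
    rw [hS₀, hS₁, ← Finset.filter_or]
    apply Finset.filter_congr
    intro γ _
    constructor
    · rintro ⟨h1, h2⟩
      rcases Nat.le_one_iff_eq_zero_or_eq_one.mp h2 with h | h
      · exact Or.inl ⟨h1, h⟩
      · exact Or.inr ⟨h1, h⟩
    · rintro (⟨h1, h2⟩ | ⟨h1, h2⟩) <;> exact ⟨h1, by omega⟩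
  have hdisj : Disjoint S₀ S₁ := by
    rw [Finset.disjoint_left]
    intro γ h0 h1
    rw [hS₀, Finset.mem_filter] at h0
    rw [hS₁, Finset.mem_filter] at h1
    omega
  -- S₀ = powersetCard of O
  have hS0eq : S₀ = O.powersetCard (d + 1) := by
    ext γ
    simp only [hS₀, Finset.mem_filter, Finset.mem_univ, true_and,
      Finset.mem_powersetCard, Finset.card_eq_zero, Finset.filter_eq_empty_iff]
    constructor
    · rintro ⟨h1, h2⟩
      refine ⟨fun v hv => ?_, h1⟩
      simp only [hO, Finset.mem_filter, Finset.mem_univ, true_and]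
      exact h2 hv
    · rintro ⟨h1, h2⟩
      refine ⟨h2, fun v hv => ?_⟩
      have := h1 hv
      simp only [hO, Finset.mem_filter, Finset.mem_univ, true_and] at this
      exact this
  have hS0card : S₀.card = (q * (q - 1) / 2).choose (d + 1) := by
    rw [hS0eq, Finset.card_powersetCard, hO, Mq_offdiag_card]
  -- S₁ via bijection with D ×ˢ powersetCard d O
  set D : Finset (MqVertex q) := Finset.univ.filter (fun v => v.1.1 = v.1.2) with hD
  have hS1card : S₁.card = q * (q * (q - 1) / 2).choose d := by
    have key : (D ×ˢ O.powersetCard d).card = S₁.card := by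
      apply Finset.card_bij (fun x _ => insert x.1 x.2)
      · rintro ⟨v, γ⟩ hx
        simp only [Finset.mem_product, Finset.mem_powersetCard] at hx
        obtain ⟨hv, hγO, hγc⟩ := hx
        rw [hD, Finset.mem_filter] at hv
        have hvγ : v ∉ γ := fun h => by
          have := hγO h
          rw [hO, Finset.mem_filter] at this
          exact this.2 hv.2
        have hfe : γ.filter (fun v => v.1.1 = v.1.2) = ∅ := by
          rw [Finset.filter_eq_empty_iff]
          intro w hw
          have := hγO hw
          rw [hO, Finset.mem_filter] at this
          exact this.2
        simp only [hS₁, Finset.mem_filter, Finset.mem_univ, true_and]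
        constructor
        · rw [Finset.card_insert_of_notMem hvγ, hγc]
        · rw [Finset.filter_insert, if_pos hv.2, hfe]
          simp
      · rintro ⟨v, γ⟩ hx ⟨w, δ⟩ hy heq
        simp only [Finset.mem_product, Finset.mem_powersetCard] at hx hy
        obtain ⟨hv, hγO, hγc⟩ := hx
        obtain ⟨hw, hδO, hδc⟩ := hy
        rw [hD, Finset.mem_filter] at hv hw
        have hvγ : v ∉ γ := fun h => by
          have := hγO h; rw [hO, Finset.mem_filter] at this; exact this.2 hv.2
        have hwδ : w ∉ δ := fun h => by
          have := hδO h; rw [hO, Finset.mem_filter] at this; exact this.2 hw.2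
        have hfilt : (insert v γ).filter (fun u : MqVertex q => u.1.1 = u.1.2) = {v} := by
          rw [Finset.filter_insert, if_pos hv.2, Finset.filter_eq_empty_iff.mpr, LawfulSingleton.insert_empty_eq]
          intro u hu
          have := hγO hu; rw [hO, Finset.mem_filter] at this; exact this.2
        have hfilt' : (insert w δ).filter (fun u : MqVertex q => u.1.1 = u.1.2) = {w} := by
          rw [Finset.filter_insert, if_pos hw.2, Finset.filter_eq_empty_iff.mpr, LawfulSingleton.insert_empty_eq]
          intro u hu
          have := hδO hu; rw [hO, Finset.mem_filter] at this; exact this.2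
        have hvw : v = w := by
          have : ({v} : Finset (MqVertex q)) = {w} := by rw [← hfilt, ← hfilt', heq]
          exact Finset.singleton_injective this
        subst hvw
        have : γ = δ := by
          have h1 : (insert v γ).erase v = γ := Finset.erase_insert hvγ
          have h2 : (insert v δ).erase v = δ := Finset.erase_insert hwδ
          rw [← h1, ← h2, heq]
        rw [this]
      · intro γ hγ
        simp only [hS₁, Finset.mem_filter, Finset.mem_univ, true_and] at hγ
        obtain ⟨hc, hf⟩ := hγ
        obtain ⟨v, hv⟩ := Finset.card_eq_one.mp hf
        have hvγ : v ∈ γ := by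
          have : v ∈ γ.filter (fun u : MqVertex q => u.1.1 = u.1.2) := by
            rw [hv]; exact Finset.mem_singleton_self v
          exact (Finset.mem_filter.mp this).1
        have hvd : v.1.1 = v.1.2 := by
          have : v ∈ γ.filter (fun u : MqVertex q => u.1.1 = u.1.2) := by
            rw [hv]; exact Finset.mem_singleton_self v
          exact (Finset.mem_filter.mp this).2
        refine ⟨(v, γ.erase v), ?_, ?_⟩
        · simp only [Finset.mem_product, Finset.mem_powersetCard]
          refine ⟨by simp [hD, hvd], fun u hu => ?_, ?_⟩
          · rw [Finset.mem_erase] at hu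
            simp only [hO, Finset.mem_filter, Finset.mem_univ, true_and]
            intro hud
            have : u ∈ γ.filter (fun u : MqVertex q => u.1.1 = u.1.2) :=
              Finset.mem_filter.mpr ⟨hu.2, hud⟩
            rw [hv, Finset.mem_singleton] at this
            exact hu.1 this
          · rw [Finset.card_erase_of_mem hvγ, hc]; omega
        · exact Finset.insert_erase hvγ
    rw [← key, Finset.card_product, Finset.card_powersetCard, hD, hO, Mq_diag_card, Mq_offdiag_card]
  rw [hsplit, Finset.card_union_of_disjoint hdisj, hS0card, hS1card]
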